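/- Let p ≥ 1 and m ≥ 0, let Ξ_{p,m} be the p-open knot vector with interior knots j/2^m (j = 1,…,2^m−1) each of multiplicity one and boundary knots 0 and 1 of multiplicity p+1, and let Ξ'_{p,m} denote the truncation of Ξ_{p,m}, i.e. the knot vector Ξ_{p,m} without its first and last knot (a (p−1)-open knot vector with the same interior knots). Then the derivatives of the splines of degree p reproduce exactly the spline space of degree p−1 on the truncated knot vector: { f' restricted to (0,1) minus the interior knots : f ∈ S_p(Ξ_{p,m}) } = { g restricted to the same set : g ∈ S_{p−1}(Ξ'_{p,m}) }; in particular ∂ S_p(Ξ_{p,m}) = S_{p−1}(Ξ'_{p,m}). -/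

import Mathlib

/-- The B-spline basis functions `b_j^p` associated with a knot sequence `ξ`, defined by the
Cox–de Boor recursion, with the convention that any term with zero denominator is zero:
`b_j^0(x) = 1` if `ξ_j ≤ x < ξ_{j+1}` and `0` otherwise, and
`b_j^{p}(x) = (x−ξ_j)/(ξ_{j+p}−ξ_j)·b_j^{p−1}(x) + (ξ_{j+p+1}−x)/(ξ_{j+p+1}−ξ_{j+1})·b_{j+1}^{p−1}(x)`. -/
noncomputable def bspline (ξ : ℕ → ℝ) : ℕ → ℕ → ℝ → ℝ
  | 0, j, x => if ξ j ≤ x ∧ x < ξ (j + 1) then 1 else 0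
  | p + 1, j, x =>
      (if ξ (j + p + 1) = ξ j then 0
        else (x - ξ j) / (ξ (j + p + 1) - ξ j) * bspline ξ p j x) +
      (if ξ (j + p + 2) = ξ (j + 1) then 0
        else (ξ (j + p + 2) - x) / (ξ (j + p + 2) - ξ (j + 1)) * bspline ξ p (j + 1) x)

/-- `ξ` is a `p`-open knot vector with `k` control points: `0 ≤ p ≤ k`, the entries
`ξ_0, …, ξ_{k+p}` are nondecreasing and lie in `[0,1]`, the first `p+1` knots equal `0`
and the last `p+1` knots equal `1`. -/
def IsOpenKnotVector (ξ : ℕ → ℝ) (p k : ℕ) : Prop :=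
  p ≤ k ∧
  (∀ j ≤ p, ξ j = 0) ∧
  (∀ j, k ≤ j → j ≤ k + p → ξ j = 1) ∧
  (∀ i j, i ≤ j → j ≤ k + p → ξ i ≤ ξ j) ∧
  (∀ j ≤ k + p, ξ j ∈ Set.Icc (0 : ℝ) 1)

/-- The uniform `p`-open knot vector `Ξ_{p,m}` on level `m`: the knot `0` repeated `p+1`
times, the interior knots `1/2^m, …, (2^m−1)/2^m`, and the knot `1` repeated `p+1` times;
as a ℕ-indexed sequence, `ξ_j = clamp_{[0,1]}((j−p)/2^m)`. -/
noncomputable def uniformKnots (p m : ℕ) (j : ℕ) : ℝ :=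
  min 1 (max 0 (((j : ℝ) - (p : ℝ)) / 2 ^ m))

set_option maxHeartbeats 1000000


noncomputable def bsplineDeriv (ξ : ℕ → ℝ) (p j : ℕ) (x : ℝ) : ℝ :=
  (if ξ (j + p) = ξ j then 0 else (p : ℝ) / (ξ (j + p) - ξ j) * bspline ξ (p - 1) j x) -
  (if ξ (j + p + 1) = ξ (j + 1) then 0
    else (p : ℝ) / (ξ (j + p + 1) - ξ (j + 1)) * bspline ξ (p - 1) (j + 1) x)

lemma bspline_shift (ξ : ℕ → ℝ) (q : ℕ) : ∀ j x, bspline (fun i => ξ (i + 1)) q j x = bspline ξ q (j + 1) x := by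
  induction q with
  | zero => intro j x; simp [bspline]
  | succ q ih =>
      intro j x
      simp only [bspline, ih]
      ring_nf


lemma bspline_vanish (ξ : ℕ → ℝ) (hmono : Monotone ξ) {p j : ℕ} (h : ξ (j + p + 1) = ξ j) (x : ℝ) :
    bspline ξ p j x = 0 := by
  have hle : ∀ a b, j ≤ a → a ≤ b → b ≤ j + p + 1 → ξ a = ξ b := by
    intro a b ha hab hb
    have h1 := hmono ha
    have h2 := hmono hab
    have h3 := hmono hb
    rw [h] at h3
    linarith
  cases p with
  | zero => simp only [bspline]; rw [hle j (j+1) le_rfl (by omega) (by omega)]; simp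
  | succ p =>
      simp only [bspline]
      rw [if_pos, if_pos]
      · ring
      · exact (hle (j+1) (j+p+2) (by omega) (by omega) (by omega)).symm
      · exact (hle j (j+p+1) (by omega) (by omega) (by omega)).symm ▸ rfl

lemma bsplineDeriv_zero (ξ : ℕ → ℝ) (j : ℕ) (x : ℝ) : bsplineDeriv ξ 0 j x = 0 := by
  simp [bsplineDeriv]

lemma key (c x s0 s1 s2 e0 e1 e2 β0 β1 β2 : ℝ)
    (hs01 : s0 ≤ s1) (hs12 : s1 ≤ s2) (h10 : s1 ≤ e0) (h21 : s2 ≤ e1)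
    (h01 : e0 ≤ e1) (h12 : e1 ≤ e2)
    (hb0 : e0 = s0 → β0 = 0) (hb1 : e1 = s1 → β1 = 0) (hb2 : e2 = s2 → β2 = 0) :
    (if e1 = s0 then 0 else
      1/(e1-s0) * ((if e0 = s0 then 0 else (x-s0)/(e0-s0)*β0)
          + (if e1 = s1 then 0 else (e1-x)/(e1-s1)*β1))
      + (x-s0)/(e1-s0) * ((if e0 = s0 then 0 else c/(e0-s0)*β0)
          - (if e1 = s1 then 0 else c/(e1-s1)*β1)))
    + (if e2 = s1 then 0 else
      (-1)/(e2-s1) * ((if e1 = s1 then 0 else (x-s1)/(e1-s1)*β1)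
          + (if e2 = s2 then 0 else (e2-x)/(e2-s2)*β2))
      + (e2-x)/(e2-s1) * ((if e1 = s1 then 0 else c/(e1-s1)*β1)
          - (if e2 = s2 then 0 else c/(e2-s2)*β2)))
    = (if e1 = s0 then 0 else
        (c+1)/(e1-s0) * ((if e0 = s0 then 0 else (x-s0)/(e0-s0)*β0)
            + (if e1 = s1 then 0 else (e1-x)/(e1-s1)*β1)))
    - (if e2 = s1 then 0 else
        (c+1)/(e2-s1) * ((if e1 = s1 then 0 else (x-s1)/(e1-s1)*β1)
            + (if e2 = s2 then 0 else (e2-x)/(e2-s2)*β2))) := by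
  by_cases c0 : e0 = s0 <;> by_cases c1 : e1 = s1 <;> by_cases c2 : e2 = s2
  · have k1 : e1 = s0 := by linarith
    have k2 : e2 = s1 := by linarith
    simp only [if_pos k1, if_pos k2]; ring
  · have k1 : e1 = s0 := by linarith
    have k2 : ¬ e2 = s1 := fun h => c2 (by linarith)
    simp only [if_pos k1, if_neg k2, if_pos c1, if_neg c2, hb1 c1, mul_zero, zero_mul, add_zero, zero_add, sub_zero, zero_sub]
    field_simp [sub_ne_zero.mpr k2, sub_ne_zero.mpr c2]
    ring
  · have k1 : ¬ e1 = s0 := fun h => c1 (by linarith)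
    have k2 : ¬ e2 = s1 := fun h => c1 (by linarith)
    simp only [if_neg k1, if_neg k2, if_pos c0, if_pos c2, if_neg c1, hb0 c0, hb2 c2, mul_zero, zero_mul, add_zero, zero_add, sub_zero, zero_sub]
    field_simp [sub_ne_zero.mpr k1, sub_ne_zero.mpr k2, sub_ne_zero.mpr c1]
    ring
  · have k1 : ¬ e1 = s0 := fun h => c1 (by linarith)
    have k2 : ¬ e2 = s1 := fun h => c1 (by linarith)
    simp only [if_neg k1, if_neg k2, if_pos c0, if_neg c2, if_neg c1, hb0 c0, mul_zero, zero_mul, add_zero, zero_add, sub_zero, zero_sub]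
    field_simp [sub_ne_zero.mpr k1, sub_ne_zero.mpr k2, sub_ne_zero.mpr c1, sub_ne_zero.mpr c2]
    ring
  · have k1 : ¬ e1 = s0 := fun h => c0 (by linarith)
    have k2 : e2 = s1 := by linarith
    simp only [if_neg k1, if_pos k2, if_neg c0, if_pos c1, if_pos c2, hb1 c1, hb2 c2, mul_zero, zero_mul, add_zero, zero_add, sub_zero, zero_sub]
    field_simp [sub_ne_zero.mpr k1, sub_ne_zero.mpr c0]
    ring
  · have k1 : ¬ e1 = s0 := fun h => c0 (by linarith)
    have k2 : ¬ e2 = s1 := fun h => c2 (by linarith)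
    simp only [if_neg k1, if_neg k2, if_neg c0, if_pos c1, if_neg c2, hb1 c1, mul_zero, zero_mul, add_zero, zero_add, sub_zero, zero_sub]
    field_simp [sub_ne_zero.mpr k1, sub_ne_zero.mpr k2, sub_ne_zero.mpr c0, sub_ne_zero.mpr c2]
    ring
  · have k1 : ¬ e1 = s0 := fun h => c0 (by linarith)
    have k2 : ¬ e2 = s1 := fun h => c1 (by linarith)
    simp only [if_neg k1, if_neg k2, if_neg c0, if_neg c1, if_pos c2, hb2 c2, mul_zero, zero_mul, add_zero, zero_add, sub_zero, zero_sub]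
    field_simp [sub_ne_zero.mpr k1, sub_ne_zero.mpr k2, sub_ne_zero.mpr c0, sub_ne_zero.mpr c1]
    ring
  · have k1 : ¬ e1 = s0 := fun h => c0 (by linarith)
    have k2 : ¬ e2 = s1 := fun h => c1 (by linarith)
    simp only [if_neg k1, if_neg k2, if_neg c0, if_neg c1, if_neg c2]
    field_simp [sub_ne_zero.mpr k1, sub_ne_zero.mpr k2, sub_ne_zero.mpr c0, sub_ne_zero.mpr c1,
      sub_ne_zero.mpr c2]
    ring

lemma deriv_step (ξ : ℕ → ℝ) (hmono : Monotone ξ) (p j : ℕ) (x : ℝ) :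
    (if ξ (j + p + 1) = ξ j then 0
      else 1 / (ξ (j + p + 1) - ξ j) * bspline ξ p j x
        + (x - ξ j) / (ξ (j + p + 1) - ξ j) * bsplineDeriv ξ p j x)
    + (if ξ (j + p + 2) = ξ (j + 1) then 0
      else (-1) / (ξ (j + p + 2) - ξ (j + 1)) * bspline ξ p (j + 1) x
        + (ξ (j + p + 2) - x) / (ξ (j + p + 2) - ξ (j + 1)) * bsplineDeriv ξ p (j + 1) x)
    = bsplineDeriv ξ (p + 1) j x := by
  cases p with
  | zero =>
      simp only [bsplineDeriv_zero, bsplineDeriv, bspline, Nat.add_zero, Nat.add_sub_cancel,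
        Nat.cast_one, mul_zero, add_zero, show j+1+1 = j+2 from rfl]
      norm_num
      split_ifs <;> ring
  | succ r =>
      have i1 : j + (r+1) = j + r + 1 := by omega
      have i2 : j + (r+1) + 1 = j + r + 2 := by omega
      have i3 : j + (r+1) + 2 = j + r + 3 := by omega
      have i4 : j + (r+1+1) = j + r + 2 := by omega
      have i5 : j + (r+1+1) + 1 = j + r + 3 := by omega
      have i6 : j + 1 + (r+1) = j + r + 2 := by omega
      have i7 : j + 1 + (r+1) + 1 = j + r + 3 := by omega
      have i8 : j + 1 + r + 1 = j + r + 2 := by omega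
      have i9 : j + 1 + r + 2 = j + r + 3 := by omega
      have i10 : j + 1 + 1 = j + 2 := by omega
      have icast : ((r+1+1 : ℕ) : ℝ) = ((r+1 : ℕ) : ℝ) + 1 := by push_cast; ring
      simp only [bsplineDeriv, bspline, Nat.add_sub_cancel, i1, i2, i3, i4, i5, i6, i7, i8, i9,
        i10, icast]
      exact key ((r+1 : ℕ) : ℝ) x (ξ j) (ξ (j+1)) (ξ (j+2)) (ξ (j+r+1)) (ξ (j+r+2)) (ξ (j+r+3))
        (bspline ξ r j x) (bspline ξ r (j+1) x) (bspline ξ r (j+2) x)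
        (hmono (by omega)) (hmono (by omega)) (hmono (by omega)) (hmono (by omega))
        (hmono (by omega)) (hmono (by omega))
        (fun h => bspline_vanish ξ hmono (by rw [show j + r + 1 = j + r + 1 from rfl]; exact h) x)
        (fun h => bspline_vanish ξ hmono (show ξ (j+1+r+1) = ξ (j+1) by rw [i8]; exact h) x)
        (fun h => bspline_vanish ξ hmono (show ξ (j+2+r+1) = ξ (j+2) by
          rw [show j+2+r+1 = j+r+3 from by omega]; exact h) x)

lemma hasDerivAt_bspline_zero (ξ : ℕ → ℝ) {x : ℝ} (j : ℕ) (h0 : x ≠ ξ j) (h1 : x ≠ ξ (j + 1)) :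
    HasDerivAt (bspline ξ 0 j) 0 x := by
  have hev : bspline ξ 0 j =ᶠ[nhds x] fun _ => bspline ξ 0 j x := by
    have e0 : ∀ᶠ y in nhds x, (ξ j ≤ y ↔ ξ j ≤ x) := by
      rcases lt_or_gt_of_ne h0 with h | h
      · filter_upwards [eventually_lt_nhds h] with y hy
        constructor <;> intro <;> [linarith; linarith]
      · filter_upwards [eventually_gt_nhds h] with y hy
        constructor <;> intro <;> [linarith; linarith]
    have e1 : ∀ᶠ y in nhds x, (y < ξ (j+1) ↔ x < ξ (j+1)) := by
      rcases lt_or_gt_of_ne h1 with h | h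
      · filter_upwards [eventually_lt_nhds h] with y hy
        constructor <;> intro <;> [linarith; linarith]
      · filter_upwards [eventually_gt_nhds h] with y hy
        constructor <;> intro <;> [linarith; linarith]
    filter_upwards [e0, e1] with y hy0 hy1
    simp only [bspline, hy0, hy1]
  exact (hasDerivAt_const x _).congr_of_eventuallyEq hev


lemma hasDerivAt_bspline (ξ : ℕ → ℝ) (hmono : Monotone ξ) {x : ℝ} (hx : ∀ i, x ≠ ξ i) (p j : ℕ) :
    HasDerivAt (bspline ξ p j) (bsplineDeriv ξ p j x) x := by
  induction p generalizing j with
  | zero => rw [bsplineDeriv_zero]; exact hasDerivAt_bspline_zero ξ j (hx j) (hx (j + 1))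
  | succ p ih =>
      have hfun : bspline ξ (p + 1) j = fun y =>
          (if ξ (j + p + 1) = ξ j then 0
            else (y - ξ j) / (ξ (j + p + 1) - ξ j) * bspline ξ p j y) +
          (if ξ (j + p + 2) = ξ (j + 1) then 0
            else (ξ (j + p + 2) - y) / (ξ (j + p + 2) - ξ (j + 1)) * bspline ξ p (j + 1) y) := by
        funext y; simp only [bspline]
      rw [hfun, ← deriv_step ξ hmono p j x]
      apply HasDerivAt.add
      · by_cases c : ξ (j + p + 1) = ξ j
        · simp only [if_pos c]; exact hasDerivAt_const x 0
        · simp only [if_neg c]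
          have h := (((hasDerivAt_id x).sub_const (ξ j)).div_const
            (ξ (j + p + 1) - ξ j)).mul (ih j)
          simp only [id_eq] at h
          exact h.congr_deriv (by ring)
      · by_cases c : ξ (j + p + 2) = ξ (j + 1)
        · simp only [if_pos c]; exact hasDerivAt_const x 0
        · simp only [if_neg c]
          have h := (((hasDerivAt_const x (ξ (j + p + 2))).sub (hasDerivAt_id x)).div_const
            (ξ (j + p + 2) - ξ (j + 1))).mul (ih (j + 1))
          simp only [Pi.sub_apply, id_eq] at h
          exact h.congr_deriv (by ring)

lemma uk_mono (p m : ℕ) : Monotone (uniformKnots p m) := by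
  intro a b hab
  unfold uniformKnots
  have : ((a : ℝ) - p) / 2 ^ m ≤ ((b : ℝ) - p) / 2 ^ m := by
    gcongr
  exact min_le_min le_rfl (max_le_max le_rfl this)

lemma uk_zero (p m j : ℕ) (h : j ≤ p) : uniformKnots p m j = 0 := by
  unfold uniformKnots
  have h1 : ((j : ℝ) - p) / 2 ^ m ≤ 0 := by
    apply div_nonpos_of_nonpos_of_nonneg
    · simp only [sub_nonpos]; exact_mod_cast h
    · positivity
  rw [max_eq_left h1, min_eq_right zero_le_one]

lemma uk_one (p m j : ℕ) (h : p + 2 ^ m ≤ j) : uniformKnots p m j = 1 := by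
  unfold uniformKnots
  have h1 : (1 : ℝ) ≤ ((j : ℝ) - p) / 2 ^ m := by
    rw [le_div_iff₀ (by positivity)]
    have : ((p : ℝ) + 2 ^ m) ≤ (j : ℝ) := by exact_mod_cast h
    push_cast at this ⊢
    linarith
  rw [min_eq_left]
  calc (1:ℝ) ≤ _ := h1
  _ ≤ max 0 _ := le_max_right _ _

lemma uk_mid (p m j : ℕ) (h1 : p ≤ j) (h2 : j ≤ p + 2 ^ m) :
    uniformKnots p m j = ((j : ℝ) - p) / 2 ^ m := by
  unfold uniformKnots
  have hp : (p : ℝ) ≤ j := by exact_mod_cast h1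
  have hj : (j : ℝ) ≤ p + 2 ^ m := by exact_mod_cast h2
  have h0 : (0:ℝ) ≤ ((j:ℝ) - p) / 2 ^ m := div_nonneg (by linarith) (by positivity)
  rw [max_eq_right h0, min_eq_right (by rw [div_le_one (by positivity)]; linarith)]

lemma uk_lt (p m : ℕ) (hp : 1 ≤ p) {i : ℕ} (h1 : 1 ≤ i) (h2 : i ≤ 2 ^ m + p - 1) :
    uniformKnots p m i < uniformKnots p m (i + p) := by
  have h2m : 1 ≤ 2 ^ m := Nat.one_le_two_pow
  rcases le_or_gt i p with hip | hip
  · have hi0 : uniformKnots p m i = 0 := uk_zero p m i hip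
    rw [hi0]
    have : uniformKnots p m (p + 1) ≤ uniformKnots p m (i + p) := uk_mono p m (by omega)
    have hval : uniformKnots p m (p + 1) = ((p + 1 : ℕ) : ℝ) / 2 ^ m - (p : ℝ) / 2 ^ m := by
      rw [uk_mid p m (p+1) (by omega) (by omega)]
      push_cast; ring
    calc (0:ℝ) < uniformKnots p m (p+1) := by
            rw [uk_mid p m (p+1) (by omega) (by omega)]
            apply div_pos (by push_cast; linarith) (by positivity)
      _ ≤ _ := this
  · have hi : uniformKnots p m i = ((i : ℝ) - p) / 2 ^ m := uk_mid p m i (by omega) (by omega)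
    have hlt1 : ((i : ℝ) - p) / 2 ^ m < 1 := by
      rw [div_lt_one (by positivity)]
      have : (i : ℝ) ≤ 2 ^ m + p - 1 := by
        have : (i:ℕ) ≤ 2 ^ m + p - 1 := h2
        have h' : (i:ℝ) ≤ ((2 ^ m + p - 1 : ℕ) : ℝ) := by exact_mod_cast this
        calc (i:ℝ) ≤ _ := h'
        _ ≤ (2:ℝ) ^ m + p - 1 := by
            push_cast [Nat.cast_sub (by omega : 1 ≤ 2 ^ m + p)]
            push_cast
            norm_num
      push_cast at this ⊢
      linarith
    rcases le_or_gt (i + p) (p + 2 ^ m) with hle | hgt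
    · rw [hi, uk_mid p m (i + p) (by omega) hle]
      rw [div_lt_div_iff_of_pos_right (by positivity)]
      push_cast
      have : (1:ℝ) ≤ p := by exact_mod_cast hp
      linarith
    · rw [hi, uk_one p m (i + p) (by omega)]
      exact hlt1
lemma x_ne_knots (p m : ℕ) {x : ℝ} (hx : x ∈ ((Set.Ioo (0 : ℝ) 1) \
      {x : ℝ | ∃ j : ℕ, 0 < j ∧ j < 2 ^ m ∧ x = (j : ℝ) / 2 ^ m} : Set ℝ)) :
    ∀ i, x ≠ uniformKnots p m i := by
  obtain ⟨⟨hx0, hx1⟩, hxk⟩ := hx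
  intro i h
  rcases le_or_gt i p with hip | hip
  · rw [uk_zero p m i hip] at h; linarith
  rcases le_or_gt (p + 2 ^ m) i with hip2 | hip2
  · rw [uk_one p m i hip2] at h; linarith
  · rw [uk_mid p m i (by omega) (by omega)] at h
    apply hxk
    refine ⟨i - p, by omega, by omega, ?_⟩
    rw [h]
    congr 1
    push_cast [Nat.cast_sub (by omega : p ≤ i)]
    ring

/-- Derivatives of splines of degree `p ≥ 1` on `Ξ_{p,m}` reproduce exactly the splines of
degree `p−1` on the truncated knot vector `Ξ'_{p,m}` (the knot vector without its first and
last knot, i.e. the index-shifted sequence `j ↦ ξ_{j+1}`, a `(p−1)`-open knot vector with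
`2^m + p − 1` control points).  Both spaces are compared as functions on
`D = (0,1) \ {interior knots}`, where every spline is differentiable:
`{f'|_D : f ∈ S_p(Ξ_{p,m})} = {g|_D : g ∈ S_{p−1}(Ξ'_{p,m})}`. -/
theorem deriv_spline_space_eq (p m : ℕ) (hp : 1 ≤ p) :
    {h : ((Set.Ioo (0 : ℝ) 1) \
            {x : ℝ | ∃ j : ℕ, 0 < j ∧ j < 2 ^ m ∧ x = (j : ℝ) / 2 ^ m} : Set ℝ) → ℝ |
        ∃ f ∈ Submodule.span ℝ
            (Set.range fun j : Fin (2 ^ m + p) => bspline (uniformKnots p m) p j),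
          h = Set.restrict _ (deriv f)} =
    {h : ((Set.Ioo (0 : ℝ) 1) \
            {x : ℝ | ∃ j : ℕ, 0 < j ∧ j < 2 ^ m ∧ x = (j : ℝ) / 2 ^ m} : Set ℝ) → ℝ |
        ∃ g ∈ Submodule.span ℝ
            (Set.range fun j : Fin (2 ^ m + p - 1) =>
              bspline (fun i => uniformKnots p m (i + 1)) (p - 1) j),
          h = Set.restrict _ g} := by
  classical
  have h2m : 1 ≤ 2 ^ m := Nat.one_le_two_pow
  set ξ : ℕ → ℝ := uniformKnots p m with hξ
  have hmono : Monotone ξ := uk_mono p m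
  have hmem : ∀ n : ℕ, 1 ≤ n → n < 2 ^ m + p →
      bspline ξ (p - 1) n ∈ Submodule.span ℝ (Set.range fun j : Fin (2 ^ m + p - 1) =>
        bspline (fun i => uniformKnots p m (i + 1)) (p - 1) (j : ℕ)) := by
    intro n h1 h2
    apply Submodule.subset_span
    refine ⟨⟨n - 1, by omega⟩, ?_⟩
    funext x
    show bspline (fun i => uniformKnots p m (i + 1)) (p - 1) (n - 1) x = bspline ξ (p - 1) n x
    rw [bspline_shift, show n - 1 + 1 = n from by omega]
  ext h
  simp only [Set.mem_setOf_eq]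
  constructor
  · rintro ⟨f, hf, rfl⟩
    rw [Submodule.mem_span_range_iff_exists_fun] at hf
    obtain ⟨c, hc⟩ := hf
    refine ⟨fun y => ∑ i : Fin (2 ^ m + p), c i * bsplineDeriv ξ p i y, ?_, ?_⟩
    · have hrw : (fun y => ∑ i : Fin (2 ^ m + p), c i * bsplineDeriv ξ p i y)
          = ∑ i : Fin (2 ^ m + p),
              ((c i * if ξ ((i : ℕ) + p) = ξ (i : ℕ) then 0
                  else (p : ℝ) / (ξ ((i : ℕ) + p) - ξ (i : ℕ))) • bspline ξ (p - 1) (i : ℕ)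
               - (c i * if ξ ((i : ℕ) + p + 1) = ξ ((i : ℕ) + 1) then 0
                  else (p : ℝ) / (ξ ((i : ℕ) + p + 1) - ξ ((i : ℕ) + 1))) •
                    bspline ξ (p - 1) ((i : ℕ) + 1)) := by
        funext y
        rw [Finset.sum_apply]
        apply Finset.sum_congr rfl
        intro i _
        simp only [Pi.sub_apply, Pi.smul_apply, smul_eq_mul, bsplineDeriv]
        split_ifs <;> ring
      rw [hrw]
      apply Submodule.sum_mem
      intro i _
      apply Submodule.sub_mem
      · by_cases C : ξ ((i : ℕ) + p) = ξ (i : ℕ)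
        · simp only [if_pos C, mul_zero, zero_smul]
          exact Submodule.zero_mem _
        · apply Submodule.smul_mem
          apply hmem _ ?_ (by have := i.isLt; omega)
          by_contra hi0
          have hi : (i : ℕ) = 0 := by omega
          apply C
          rw [hi, hξ]
          rw [uk_zero p m (0 + p) (by omega), uk_zero p m 0 (by omega)]
      · by_cases C : ξ ((i : ℕ) + p + 1) = ξ ((i : ℕ) + 1)
        · simp only [if_pos C, mul_zero, zero_smul]
          exact Submodule.zero_mem _
        · apply Submodule.smul_mem
          apply hmem _ (by omega) ?_
          by_contra hbig
          have hi : (i : ℕ) = 2 ^ m + p - 1 := by have := i.isLt; omega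
          apply C
          rw [hi, hξ]
          rw [uk_one p m _ (by omega), uk_one p m _ (by omega)]
    · funext z
      obtain ⟨x, hx⟩ := z
      have hxne : ∀ i, x ≠ ξ i := x_ne_knots p m hx
      have hder : HasDerivAt f (∑ i : Fin (2 ^ m + p), c i * bsplineDeriv ξ p i x) x := by
        rw [← hc]
        have hfn : (∑ i : Fin (2 ^ m + p), c i • bspline ξ p (i : ℕ))
            = fun y => ∑ i : Fin (2 ^ m + p), c i * bspline ξ p (i : ℕ) y := by
          funext y; rw [Finset.sum_apply]; simp
        rw [hfn]
        exact HasDerivAt.fun_sum fun i _ => (hasDerivAt_bspline ξ hmono hxne p i).const_mul (c i)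
      show deriv f x = _
      exact hder.deriv
  · rintro ⟨g, hg, rfl⟩
    rw [Submodule.mem_span_range_iff_exists_fun] at hg
    obtain ⟨e, he⟩ := hg
    refine ⟨∑ i : Fin (2 ^ m + p - 1), (e i * (ξ ((i : ℕ) + 1 + p) - ξ ((i : ℕ) + 1)) / p) •
        (∑ j ∈ Finset.Ico ((i : ℕ) + 1) (2 ^ m + p), bspline ξ p j), ?_, ?_⟩
    · apply Submodule.sum_mem
      intro i _
      apply Submodule.smul_mem
      apply Submodule.sum_mem
      intro j hj
      rw [Finset.mem_Ico] at hj
      exact Submodule.subset_span ⟨⟨j, hj.2⟩, rfl⟩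
    · funext z
      obtain ⟨x, hx⟩ := z
      have hxne : ∀ i, x ≠ ξ i := x_ne_knots p m hx
      show g x = deriv _ x
      have hfn : (∑ i : Fin (2 ^ m + p - 1), (e i * (ξ ((i : ℕ) + 1 + p) - ξ ((i : ℕ) + 1)) / p) •
            (∑ j ∈ Finset.Ico ((i : ℕ) + 1) (2 ^ m + p), bspline ξ p j))
          = fun y => ∑ i : Fin (2 ^ m + p - 1),
              (e i * (ξ ((i : ℕ) + 1 + p) - ξ ((i : ℕ) + 1)) / p) *
                ∑ j ∈ Finset.Ico ((i : ℕ) + 1) (2 ^ m + p), bspline ξ p j y := by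
        funext y
        rw [Finset.sum_apply]
        apply Finset.sum_congr rfl
        intro i _
        simp [Finset.sum_apply]
      have hder : HasDerivAt (fun y => ∑ i : Fin (2 ^ m + p - 1),
            (e i * (ξ ((i : ℕ) + 1 + p) - ξ ((i : ℕ) + 1)) / p) *
              ∑ j ∈ Finset.Ico ((i : ℕ) + 1) (2 ^ m + p), bspline ξ p j y)
          (∑ i : Fin (2 ^ m + p - 1),
            (e i * (ξ ((i : ℕ) + 1 + p) - ξ ((i : ℕ) + 1)) / p) *
              ∑ j ∈ Finset.Ico ((i : ℕ) + 1) (2 ^ m + p), bsplineDeriv ξ p j x) x :=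
        HasDerivAt.fun_sum fun i _ =>
          (HasDerivAt.fun_sum fun j _ => hasDerivAt_bspline ξ hmono hxne p j).const_mul _
      rw [hfn, hder.deriv]
      set u : ℕ → ℝ := fun j =>
        if ξ (j + p) = ξ j then 0 else (p : ℝ) / (ξ (j + p) - ξ j) * bspline ξ (p - 1) j x
        with hu
      have hstep : ∀ j : ℕ, bsplineDeriv ξ p j x = u j - u (j + 1) := by
        intro j
        simp only [bsplineDeriv, hu]
        rw [show j + 1 + p = j + p + 1 from by omega]
      have htel : ∀ a b : ℕ, a ≤ b → ∑ j ∈ Finset.Ico a b, (u j - u (j + 1)) = u a - u b := by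
        intro a b hab
        rw [Finset.sum_Ico_eq_sub _ hab, Finset.sum_range_sub' u, Finset.sum_range_sub' u]
        ring
      have huk : u (2 ^ m + p) = 0 := by
        simp only [hu]
        rw [if_pos]
        rw [hξ, uk_one p m _ (by omega), uk_one p m _ (by omega)]
      have hgx : g x = ∑ i : Fin (2 ^ m + p - 1), e i * bspline ξ (p - 1) ((i : ℕ) + 1) x := by
        rw [← he, Finset.sum_apply]
        apply Finset.sum_congr rfl
        intro i _
        simp [bspline_shift]
      rw [hgx]
      apply Finset.sum_congr rfl
      intro i _
      have hlt : ξ ((i : ℕ) + 1) < ξ ((i : ℕ) + 1 + p) := by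
        rw [show (i:ℕ) + 1 + p = ((i:ℕ) + 1) + p from rfl]
        exact uk_lt p m hp (by omega) (by have := i.isLt; omega)
      have hsum : (∑ j ∈ Finset.Ico ((i : ℕ) + 1) (2 ^ m + p), bsplineDeriv ξ p j x)
          = u ((i : ℕ) + 1) - u (2 ^ m + p) := by
        rw [← htel _ _ (by have := i.isLt; omega)]
        apply Finset.sum_congr rfl
        intro j _
        exact hstep j
      rw [hsum, huk, sub_zero]
      simp only [hu]
      rw [show (i:ℕ) + 1 + p = ((i:ℕ) + 1) + p from rfl] at hlt ⊢
      rw [if_neg (ne_of_gt hlt)]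
      have hΔ : ξ (((i : ℕ) + 1) + p) - ξ ((i : ℕ) + 1) ≠ 0 := sub_ne_zero.mpr (ne_of_gt hlt)
      have hpne : (p : ℝ) ≠ 0 := Nat.cast_ne_zero.mpr (by omega)
      field_simp
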